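/- Let H be an m×m real symmetric positive definite matrix, let m ≤ n, and suppose W⁰ ∈ R^{m×n} has orthonormal rows, i.e. W⁰ (W⁰)ᵀ = I_m (an element of the Stiefel manifold). Then the whitened gradient descent step with optimal step size η* = ‖H W⁰‖₁ / Tr(H) reaches the global minimizer of L(W) = (1/2)·Tr(Wᵀ H W) in one step: W¹ = W⁰ − η* (H W⁰ (H W⁰)ᵀ)^{-1/2} (H W⁰) = 0 = W*. -/

import Mathlib

open Matrix

open Classical in
/-- The unique positive semidefinite square root of a positive semidefinite matrix
(junk value `0` if `A` is not positive semidefinite). -/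
noncomputable def matSqrt {m : ℕ} (A : Matrix (Fin m) (Fin m) ℝ) : Matrix (Fin m) (Fin m) ℝ :=
  if h : A.PosSemidef then h.1.eigenvectorUnitary.1 *
    diagonal ((RCLike.ofReal : ℝ → ℝ) ∘ (√·) ∘ h.1.eigenvalues) *
    (star h.1.eigenvectorUnitary : Matrix (Fin m) (Fin m) ℝ) else 0

/-- The GradWhitening operator `A ↦ (A Aᵀ)^{-1/2} A`. -/
noncomputable def whiten {m n : ℕ} (A : Matrix (Fin m) (Fin n) ℝ) : Matrix (Fin m) (Fin n) ℝ :=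
  (matSqrt (A * Aᵀ))⁻¹ * A

/-- The Schatten 1-norm (sum of singular values): `‖A‖₁ = Tr((A Aᵀ)^{1/2})`. -/
noncomputable def schattenOne {m n : ℕ} (A : Matrix (Fin m) (Fin n) ℝ) : ℝ :=
  (matSqrt (A * Aᵀ)).trace

/-- The quadratic loss `L(W) = (1/2) * Tr(Wᵀ H W)`. -/
noncomputable def loss {m n : ℕ} (H : Matrix (Fin m) (Fin m) ℝ)
    (W : Matrix (Fin m) (Fin n) ℝ) : ℝ :=
  (1 / 2) * (Wᵀ * H * W).trace

/-- From an initialization `W⁰` with orthonormal rows (Stiefel manifold), one whitened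
gradient step with the optimal step size `η* = ‖H W⁰‖₁ / Tr(H)` reaches the global
minimizer `W* = 0` of the quadratic loss. -/
theorem whitened_step_one_step_convergence_stiefel {m n : ℕ} (hmn : m ≤ n)
    (H : Matrix (Fin m) (Fin m) ℝ) (hH : H.PosDef)
    (W0 : Matrix (Fin m) (Fin n) ℝ) (hW0 : W0 * W0ᵀ = 1) :
    W0 - (schattenOne (H * W0) / H.trace) • whiten (H * W0) = 0 := by
  rcases Nat.eq_zero_or_pos m with hm | hm
  · subst hm; ext i; exact absurd i.2 (by simp)
  have hHt : Hᵀ = H := hH.1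
  have key : (H * W0) * (H * W0)ᵀ = H ^ 2 := by
    rw [transpose_mul, hHt, ← Matrix.mul_assoc, Matrix.mul_assoc H W0 W0ᵀ, hW0, Matrix.mul_one, ← pow_two]
  have hps : ((H * W0) * (H * W0)ᵀ).PosSemidef := key ▸ hH.posSemidef.pow 2
  have hsq : matSqrt ((H * W0) * (H * W0)ᵀ) = H := by
    rw [matSqrt, dif_pos hps]
    have e1 : hps.1.cfc Real.sqrt = H := by
      open scoped MatrixOrder in
      rw [← hps.1.cfc_eq, key]
      open scoped MatrixOrder in
      have := CFC.sqrt_sq H hH.posSemidef.nonneg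
      open scoped MatrixOrder in
      rw [CFC.sqrt_eq_cfc, cfc_nnreal_eq_real _ (H ^ 2)] at this
      rw [show Real.sqrt = fun x => ((x.toNNReal).sqrt : ℝ) by
        funext x; rw [Real.coe_sqrt, Real.coe_toNNReal']
        rcases le_total x 0 with h | h <;> simp [h, Real.sqrt_eq_zero']]
      exact this
    rw [IsHermitian.cfc, Unitary.conjStarAlgAut_apply] at e1
    exact e1
  have hdiag : ∀ i, 0 < H i i := fun i => by
    exact hH.diag_pos
  have : Nonempty (Fin m) := ⟨⟨0, hm⟩⟩
  have htr : H.trace > 0 := by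
    simp only [Matrix.trace, Matrix.diag]
    exact Finset.sum_pos (fun i _ => hdiag i) Finset.univ_nonempty
  have hS : schattenOne (H * W0) = H.trace := by rw [schattenOne, hsq]
  have hw : whiten (H * W0) = W0 := by
    rw [whiten, hsq, ← Matrix.mul_assoc, nonsing_inv_mul _ (isUnit_iff_ne_zero.mpr hH.det_pos.ne'), Matrix.one_mul]
  rw [hS, hw, div_self htr.ne', one_smul, sub_self]
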